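/- Let p be a prime number and let K be a finite field extension of ℚ_p, equipped with its canonical topology; give Kˣ the subspace topology and (Kˣ)^r the product topology. Let f : (Kˣ)^r → (Kˣ)^r be a continuous group endomorphism. If the cokernel (Kˣ)^r / im(f) is finite, then the kernel ker(f) is finite. -/

import Mathlib

open Subgroup

/-- Abstract core: a commutative group with a descending family of "characteristic"
finite-index subgroups with finite intersection; any endomorphism with finite
cokernel has finite kernel. -/
theorem core_lemma {G : Type*} [CommGroup G] (f : G →* G)
    (hcoker : Finite (G ⧸ f.range))
    (H : ℕ → Subgroup G)
    (hanti : ∀ n, H (n + 1) ≤ H n)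
    (hmap : ∀ n, (H n).map f ≤ H n)
    (hfin : ∀ n, Finite (G ⧸ H n))
    (hint : Finite (↥(⨅ n, H n))) :
    Finite f.ker := by
  classical
  have hanti' : ∀ {m n : ℕ}, m ≤ n → H n ≤ H m := by
    intro m n hmn
    induction hmn with
    | refl => exact le_rfl
    | step h ih => exact le_trans (hanti _) ih
  set c := Nat.card (G ⧸ f.range) with hc
  have hcpos : 0 < c := Nat.card_pos
  -- induced maps on quotients
  have hle : ∀ n, H n ≤ (H n).comap f := by
    intro n x hx
    exact hmap n ⟨x, hx, rfl⟩
  -- restriction of quotient map to kernel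
  let ρ : ∀ n : ℕ, f.ker →* G ⧸ H n := fun n =>
    (QuotientGroup.mk' (H n)).comp f.ker.subtype
  let KK : ℕ → Subgroup f.ker := fun n => (ρ n).ker
  have hKmem : ∀ n (x : f.ker), x ∈ KK n ↔ (x : G) ∈ H n := by
    intro n x
    simp [KK, ρ, MonoidHom.mem_ker, QuotientGroup.eq_one_iff]
  have hKanti : ∀ {m n : ℕ}, m ≤ n → KK n ≤ KK m := by
    intro m n hmn x hx
    exact (hKmem m x).mpr (hanti' hmn ((hKmem n x).mp hx))
  -- each KK n has index ≤ c in f.ker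
  have hindexle : ∀ n, (KK n).index ≤ c ∧ (KK n).index ≠ 0 := by
    intro n
    have : Finite (G ⧸ H n) := hfin n
    -- the induced endomorphism of G ⧸ H n
    let fbar : G ⧸ H n →* G ⧸ H n := QuotientGroup.map (H n) (H n) f (hle n)
    -- card of kernel of fbar = card of cokernel of fbar ≤ c
    have h1 : Nat.card (fbar.ker) * Nat.card (fbar.range) = Nat.card (G ⧸ H n) := by
      have e1 : Nat.card (G ⧸ H n) = Nat.card ((G ⧸ H n) ⧸ fbar.ker) * Nat.card fbar.ker :=
        Subgroup.card_eq_card_quotient_mul_card_subgroup _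
      have e2 : Nat.card ((G ⧸ H n) ⧸ fbar.ker) = Nat.card fbar.range :=
        Nat.card_congr (QuotientGroup.quotientKerEquivRange fbar).toEquiv
      rw [e1, e2, mul_comm]
    have h2 : Nat.card ((G ⧸ H n) ⧸ fbar.range) * Nat.card (fbar.range)
        = Nat.card (G ⧸ H n) := by
      have e1 : Nat.card (G ⧸ H n) = Nat.card ((G ⧸ H n) ⧸ fbar.range) * Nat.card fbar.range :=
        Subgroup.card_eq_card_quotient_mul_card_subgroup _
      rw [e1]
    have hrangepos : 0 < Nat.card fbar.range := Nat.card_pos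
    have hkercoker : Nat.card fbar.ker = Nat.card ((G ⧸ H n) ⧸ fbar.range) :=
      Nat.eq_of_mul_eq_mul_right hrangepos (h1.trans h2.symm)
    -- surjection from coker f onto coker fbar
    have hsurj : Nat.card ((G ⧸ H n) ⧸ fbar.range) ≤ c := by
      let ψ : G →* (G ⧸ H n) ⧸ fbar.range :=
        (QuotientGroup.mk' fbar.range).comp (QuotientGroup.mk' (H n))
      have hker : f.range ≤ ψ.ker := by
        rintro y ⟨x, rfl⟩
        have : (QuotientGroup.mk (f x) : G ⧸ H n) = fbar (QuotientGroup.mk x) := rfl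
        simp only [MonoidHom.mem_ker, ψ, MonoidHom.comp_apply, QuotientGroup.mk'_apply]
        rw [this, QuotientGroup.eq_one_iff]
        exact ⟨QuotientGroup.mk x, rfl⟩
      let φ : G ⧸ f.range →* (G ⧸ H n) ⧸ fbar.range :=
        QuotientGroup.lift f.range ψ hker
      have hφ : Function.Surjective φ := by
        intro q
        obtain ⟨y, rfl⟩ := QuotientGroup.mk'_surjective fbar.range q
        obtain ⟨x, rfl⟩ := QuotientGroup.mk'_surjective (H n) y
        exact ⟨QuotientGroup.mk x, rfl⟩
      exact Nat.card_le_card_of_surjective φ hφ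
    -- image of kernel inside ker fbar
    have hrange : (ρ n).range ≤ fbar.ker := by
      rintro y ⟨x, rfl⟩
      have hx : f (x : G) = 1 := x.2
      simp only [MonoidHom.mem_ker, ρ, MonoidHom.comp_apply, QuotientGroup.mk'_apply]
      show fbar (QuotientGroup.mk (x : G)) = 1
      have : fbar (QuotientGroup.mk (x : G)) = QuotientGroup.mk (f (x : G)) := rfl
      rw [this, hx]; rfl
    have hfinker : Finite fbar.ker := Subtype.finite
    have hcard1 : Nat.card ((ρ n).range) ≤ Nat.card fbar.ker := by
      exact Nat.card_le_card_of_injective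
        (Set.inclusion hrange) (Set.inclusion_injective hrange)
    have hidx : (KK n).index = Nat.card ((ρ n).range) := by
      have := Nat.card_congr (QuotientGroup.quotientKerEquivRange (ρ n)).toEquiv
      simpa [KK, Subgroup.index] using this
    have hkerle : Nat.card fbar.ker ≤ c := le_trans (le_of_eq hkercoker) hsurj
    constructor
    · rw [hidx]; exact le_trans hcard1 hkerle
    · rw [hidx]
      have : Finite ((ρ n).range) := Subtype.finite
      exact Nat.card_pos.ne'
  -- choose n with maximal index
  obtain ⟨N, hN⟩ : ∃ N, ∀ n, (KK n).index ≤ (KK N).index := by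
    have hbdd : ∀ n, (KK n).index ≤ c := fun n => (hindexle n).1
    let P : ℕ → Prop := fun k => ∃ n, (KK n).index = k
    have hP0 : P ((KK 0).index) := ⟨0, rfl⟩
    have hgood : P (Nat.findGreatest P c) := Nat.findGreatest_spec (hbdd 0) hP0
    obtain ⟨N, hNeq⟩ := hgood
    refine ⟨N, fun n => ?_⟩
    rw [hNeq]
    exact Nat.le_findGreatest (hbdd n) ⟨n, rfl⟩
  -- chain stabilizes at N
  have hstab : ∀ n, N ≤ n → KK n = KK N := by
    intro n hn
    have hsub : KK n ≤ KK N := hKanti hn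
    have hdvd : (KK N).index ∣ (KK n).index := Subgroup.index_dvd_of_le hsub
    have heq : (KK n).index = (KK N).index :=
      le_antisymm (hN n) (Nat.le_of_dvd (Nat.pos_of_ne_zero (hindexle n).2) hdvd)
    -- conclude KK n = KK N
    have hrel : (KK n).relIndex (KK N) * (KK N).index = (KK n).index :=
      Subgroup.relIndex_mul_index hsub
    have : (KK n).relIndex (KK N) = 1 := by
      have hNidx : (KK N).index ≠ 0 := (hindexle N).2
      have h' : (KK n).relIndex (KK N) * (KK N).index = 1 * (KK N).index := by
        rw [hrel, heq, one_mul]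
      exact Nat.eq_of_mul_eq_mul_right (Nat.pos_of_ne_zero hNidx) h'
    exact le_antisymm hsub (Subgroup.relIndex_eq_one.mp this)
  -- the intersection of the chain equals KK N, and is finite
  have hKN : KK N = ⨅ n, KK n := by
    apply le_antisymm
    · refine le_iInf fun n => ?_
      rcases le_total n N with h | h
      · exact hKanti h
      · exact le_of_eq (hstab n h).symm
    · exact iInf_le _ N
  have hKNfin : Finite (KK N) := by
    rw [hKN]
    have : Function.Injective (fun x : ↥(⨅ n, KK n) => (⟨(x : f.ker), by
        have hx := x.2
        rw [Subgroup.mem_iInf] at hx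
        rw [Subgroup.mem_iInf]
        exact fun n => (hKmem n _).mp (hx n)⟩ : ↥(⨅ n, H n))) := by
      intro a b hab
      ext
      exact congrArg (fun y : ↥(⨅ n, H n) => (y : G)) hab
    exact Finite.of_injective _ this
  -- finite index + finite subgroup ⇒ finite group
  have hquotfin : Finite (f.ker ⧸ KK N) := by
    have : (KK N).index ≠ 0 := (hindexle N).2
    exact Nat.finite_of_card_ne_zero this
  exact Finite.of_equiv _ (Subgroup.groupEquivQuotientProdSubgroup (s := KK N)).symm

open scoped Topology
open Filter Metric

section KLemmas

variable (p : ℕ) [Fact p.Prime] (K : Type*) [NormedField K] [NormedAlgebra ℚ_[p] K]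
  [FiniteDimensional ℚ_[p] K]

set_option linter.unusedSectionVars false
include p

lemma norm_algebraMap_padic (a : ℚ_[p]) : ‖algebraMap ℚ_[p] K a‖ = ‖a‖ := by
  rw [Algebra.algebraMap_eq_smul_one, norm_smul, norm_one, mul_one]

lemma norm_natCast_padic (n : ℕ) : ‖(n : K)‖ ≤ 1 := by
  have : ((n : ℚ_[p]) : ℚ_[p]) = (n : ℚ_[p]) := rfl
  have h : (n : K) = algebraMap ℚ_[p] K (n : ℚ_[p]) := by
    simp [map_natCast]
  rw [h, norm_algebraMap_padic]
  have := Padic.norm_int_le_one (p := p) (n : ℤ)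
  simpa using this

lemma ultra : IsUltrametricDist K :=
  IsUltrametricDist.isUltrametricDist_of_forall_norm_natCast_le_one (norm_natCast_padic p K)

lemma proper : ProperSpace K := FiniteDimensional.proper ℚ_[p] K

lemma charzero : CharZero K := charZero_of_injective_algebraMap (algebraMap ℚ_[p] K).injective

lemma norm_p_padic : ‖(p : K)‖ = (p : ℝ)⁻¹ := by
  have h : ((p : ℕ) : K) = algebraMap ℚ_[p] K ((p : ℕ) : ℚ_[p]) := by simp [map_natCast]
  rw [h, norm_algebraMap_padic]
  simpa using padicNormE.norm_p (p := p)


lemma nontriv_local : ∃ x : K, 1 < ‖x‖ := by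
  have hp1 : (1:ℝ) < p := by exact_mod_cast (Fact.out : p.Prime).one_lt
  refine ⟨((p : K))⁻¹, ?_⟩
  rw [norm_inv, norm_p_padic p K, inv_inv]
  exact hp1

lemma quot_pow_finite (m : ℕ) (hm : 0 < m) :
    Finite (Kˣ ⧸ (powMonoidHom m : Kˣ →* Kˣ).range) := by
  haveI := ultra p K
  haveI := proper p K
  haveI := charzero p K
  letI : NontriviallyNormedField K :=
    { (inferInstance : NormedField K) with non_trivial := nontriv_local p K }
  have hp1 : (1:ℝ) < p := by exact_mod_cast (Fact.out : p.Prime).one_lt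
  have hppos : (0:ℝ) < p := lt_trans one_pos hp1
  set S := (powMonoidHom m : Kˣ →* Kˣ).range with hSdef
  -- S is open
  have hSnhds : (S : Set Kˣ) ∈ 𝓝 (1 : Kˣ) := by
    have hderiv : HasStrictDerivAt (fun x : K => x ^ m) ((m : K) * (1:K) ^ (m - 1)) 1 :=
      hasStrictDerivAt_pow m 1
    have hne : (m : K) * (1:K) ^ (m - 1) ≠ 0 := by
      simp only [one_pow, mul_one]
      exact_mod_cast Nat.cast_ne_zero.mpr hm.ne'
    have hmap := hderiv.map_nhds_eq hne
    rw [one_pow] at hmap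
    have hU : (fun x : K => x ^ m) '' (Metric.ball (1:K) 1) ∈ 𝓝 (1 : K) := by
      rw [← hmap]; exact Filter.image_mem_map (Metric.ball_mem_nhds _ one_pos)
    have hcont : ContinuousAt (Units.val : Kˣ → K) 1 := Units.continuous_val.continuousAt
    have hpre : (Units.val ⁻¹' ((fun x : K => x ^ m) '' (Metric.ball (1:K) 1)))
        ∈ 𝓝 (1 : Kˣ) := hcont.preimage_mem_nhds (by simpa using hU)
    refine Filter.mem_of_superset hpre ?_
    rintro u ⟨x, hx, hxm⟩
    have hx0 : x ≠ 0 := by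
      intro h
      rw [Metric.mem_ball, dist_eq_norm, h] at hx
      simp at hx
    refine ⟨Units.mk0 x hx0, ?_⟩
    apply Units.ext
    simpa using hxm
  have hSopen : IsOpen (S : Set Kˣ) := Subgroup.isOpen_of_mem_nhds S hSnhds
  -- compact annulus
  set C : Set K := {x : K | (p:ℝ)⁻¹ ≤ ‖x‖ ∧ ‖x‖ ≤ p} with hCdef
  have hCcomp : IsCompact C := by
    have hclosed : IsClosed C := by
      have : C = (fun x : K => ‖x‖) ⁻¹' (Set.Icc (p:ℝ)⁻¹ p) := by
        ext x; simp [hCdef, Set.mem_Icc]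
      rw [this]; exact isClosed_Icc.preimage continuous_norm
    have hbdd : Bornology.IsBounded C := by
      apply (Metric.isBounded_closedBall (x := (0:K)) (r := p)).subset
      intro x hx
      simpa [Metric.mem_closedBall, dist_eq_norm] using hx.2
    exact Metric.isCompact_of_isClosed_isBounded hclosed hbdd
  set A : Set Kˣ := Units.val ⁻¹' C with hAdef
  have hAcomp : IsCompact A := by
    rw [Units.isEmbedding_val₀.isCompact_iff]
    have himg : Units.val '' A = C := by
      apply Set.Subset.antisymm
      · rintro _ ⟨u, hu, rfl⟩; exact hu
      · intro x hx
        have hx0 : x ≠ 0 := by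
          intro h
          have := hx.1
          rw [h, norm_zero] at this
          exact absurd this (not_le.mpr (by positivity))
        exact ⟨Units.mk0 x hx0, hx, rfl⟩
    rw [himg]; exact hCcomp
  -- the uniformizer
  have hp0K : ((p : ℕ) : K) ≠ 0 := Nat.cast_ne_zero.mpr (Fact.out : p.Prime).ne_zero
  set π : Kˣ := Units.mk0 ((p:ℕ):K) hp0K with hπdef
  have hπnorm : ‖(π : K)‖ = (p:ℝ)⁻¹ := norm_p_padic p K
  have hπA : π ∈ A := by
    constructor
    · rw [hπnorm]
    · rw [hπnorm]
      calc ((p:ℝ))⁻¹ ≤ 1 := by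
            rw [inv_le_one_iff₀]; right; exact le_of_lt hp1
        _ ≤ p := le_of_lt hp1
  -- A generates Kˣ
  have hgen : ∀ u : Kˣ, u ∈ Subgroup.closure A := by
    intro u
    have hu0 : (0:ℝ) < ‖(u:K)‖ := norm_pos_iff.mpr u.ne_zero
    set L : ℝ := Real.logb p ‖(u:K)‖ with hL
    set k : ℤ := ⌈L⌉ with hk
    have hnormval : ‖((u * π ^ k : Kˣ) : K)‖ = (p:ℝ) ^ (L + (-k : ℤ)) := by
      push_cast
      rw [norm_mul, norm_zpow, hπnorm]
      have h1 : ((p:ℝ)⁻¹) ^ (k : ℤ) = (p:ℝ) ^ ((-k : ℤ) : ℝ) := by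
        rw [inv_zpow, ← zpow_neg, ← Real.rpow_intCast]
      have h2 : ‖(u:K)‖ = (p:ℝ) ^ (L : ℝ) := (Real.rpow_logb hppos (ne_of_gt hp1) hu0).symm
      rw [h1, h2, ← Real.rpow_add hppos]
      norm_num
    have hkL : L ≤ (k:ℝ) := Int.le_ceil L
    have hkL' : (k:ℝ) < L + 1 := Int.ceil_lt_add_one L
    have hwA : u * π ^ k ∈ A := by
      constructor
      · rw [hnormval]
        have : (p:ℝ)⁻¹ = (p:ℝ) ^ (-1 : ℝ) := by
          rw [Real.rpow_neg_one]
        rw [this]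
        apply Real.rpow_le_rpow_of_exponent_le (le_of_lt hp1)
        push_cast; linarith
      · rw [hnormval]
        calc (p:ℝ) ^ (L + (-k : ℤ)) ≤ (p:ℝ) ^ (1:ℝ) := by
              apply Real.rpow_le_rpow_of_exponent_le (le_of_lt hp1)
              push_cast; linarith
          _ = p := Real.rpow_one _
    have hdecomp : u = (u * π ^ k) * π ^ (-k) := by
      rw [mul_assoc, ← zpow_add, add_neg_cancel, zpow_zero, mul_one]
    rw [hdecomp]
    exact Subgroup.mul_mem _ (Subgroup.subset_closure hwA)
      (Subgroup.zpow_mem _ (Subgroup.subset_closure hπA) (-k))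
  -- image of A in the quotient is finite
  have hfinim : ((QuotientGroup.mk' S) '' A).Finite := by
    let U : A → Set Kˣ := fun a => (fun x : Kˣ => x⁻¹ * (a : Kˣ)) ⁻¹' (S : Set Kˣ)
    have hUopen : ∀ a, IsOpen (U a) := by
      intro a
      exact hSopen.preimage (by continuity)
    have hcover : A ⊆ ⋃ a, U a := by
      intro x hx
      refine Set.mem_iUnion.mpr ⟨⟨x, hx⟩, ?_⟩
      simp only [U, Set.mem_preimage, inv_mul_cancel]
      exact SetLike.mem_coe.mpr S.one_mem
    obtain ⟨t, ht⟩ := hAcomp.elim_finite_subcover U hUopen hcover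
    have : (QuotientGroup.mk' S) '' A ⊆ (QuotientGroup.mk' S) '' (⋃ a ∈ t, U a) :=
      Set.image_mono ht
    apply Set.Finite.subset _ this
    have : (QuotientGroup.mk' S) '' (⋃ a ∈ t, U a)
        ⊆ ⋃ a ∈ t, {(QuotientGroup.mk' S) (a : Kˣ)} := by
      rintro _ ⟨x, hx, rfl⟩
      rw [Set.mem_iUnion₂] at hx ⊢
      obtain ⟨a, hat, hxa⟩ := hx
      refine ⟨a, hat, ?_⟩
      simp only [Set.mem_singleton_iff]
      have : x⁻¹ * (a : Kˣ) ∈ S := hxa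
      exact ((QuotientGroup.mk'_eq_mk' S).mpr ⟨x⁻¹ * (a:Kˣ), this, by group⟩)
    apply Set.Finite.subset _ this
    exact t.finite_toSet.biUnion fun a _ => Set.finite_singleton _
  -- the quotient is a finitely generated torsion commutative group
  have htop : Subgroup.closure ((QuotientGroup.mk' S) '' A) = ⊤ := by
    rw [← MonoidHom.map_closure]
    have hclA : Subgroup.closure A = ⊤ := by
      rw [eq_top_iff]
      intro u _
      exact hgen u
    rw [hclA, ← MonoidHom.range_eq_map]
    exact MonoidHom.range_eq_top_of_surjective _ (QuotientGroup.mk'_surjective S)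
  haveI : Group.FG (Kˣ ⧸ S) := Group.fg_iff.mpr ⟨_, htop, hfinim⟩
  have htor : IsMulTorsion (Kˣ ⧸ S) := by
    intro q
    obtain ⟨x, rfl⟩ := QuotientGroup.mk'_surjective S q
    refine isOfFinOrder_iff_pow_eq_one.mpr ⟨m, hm, ?_⟩
    rw [← map_pow]
    refine (QuotientGroup.eq_one_iff _).mpr ?_
    exact ⟨x, rfl⟩
  exact CommGroup.finite_of_fg_torsion _ htor


lemma norm_gap : ∃ r : ℝ, r < 1 ∧ ∀ x : K, ‖x‖ < 1 → ‖x‖ ≤ r := by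
  haveI := ultra p K
  haveI := proper p K
  by_contra hcon
  push_neg at hcon
  have hseq : ∀ n : ℕ, ∃ x : K, ‖x‖ < 1 ∧ 1 - 1/(n+1) < ‖x‖ := by
    intro n
    obtain ⟨x, hx1, hx2⟩ := hcon (1 - 1/(n+1)) (by
      have : (0:ℝ) < 1/(n+1) := by positivity
      linarith)
    exact ⟨x, hx1, hx2⟩
  choose x hx1 hx2 using hseq
  have hmem : ∀ n, x n ∈ Metric.closedBall (0:K) 1 := by
    intro n
    rw [Metric.mem_closedBall, dist_eq_norm, sub_zero]
    exact le_of_lt (hx1 n)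
  obtain ⟨z, hz, φ, hφ, hlim⟩ :=
    (isCompact_closedBall (0:K) 1).tendsto_subseq hmem
  have hnormlim : Filter.Tendsto (fun n => ‖x (φ n)‖) Filter.atTop (𝓝 ‖z‖) :=
    (continuous_norm.continuousAt.tendsto.comp hlim)
  have hone : Filter.Tendsto (fun n => ‖x (φ n)‖) Filter.atTop (𝓝 1) := by
    have hlow : Filter.Tendsto (fun n : ℕ => 1 - 1/((φ n : ℝ)+1)) Filter.atTop (𝓝 1) := by
      have h1 : Filter.Tendsto (fun n : ℕ => ((φ n : ℝ)+1)) Filter.atTop Filter.atTop :=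
        Filter.tendsto_atTop_add_const_right _ 1
          (tendsto_natCast_atTop_atTop.comp hφ.tendsto_atTop)
      have := (tendsto_const_nhds (x := (1:ℝ))).sub (h1.inv_tendsto_atTop)
      simpa using this
    apply tendsto_of_tendsto_of_tendsto_of_le_of_le hlow tendsto_const_nhds
    · intro n; exact le_of_lt (hx2 (φ n))
    · intro n; exact le_of_lt (hx1 (φ n))
  have hznorm : ‖z‖ = 1 := tendsto_nhds_unique hnormlim hone
  have hz0 : z ≠ 0 := by
    intro h; rw [h, norm_zero] at hznorm; exact one_ne_zero hznorm.symm
  have hwlim : Filter.Tendsto (fun n => x (φ n) * z⁻¹) Filter.atTop (𝓝 1) := by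
    have := hlim.mul (tendsto_const_nhds (x := z⁻¹))
    rwa [mul_inv_cancel₀ hz0] at this
  have hev : ∀ᶠ n in Filter.atTop, ‖x (φ n) * z⁻¹ - 1‖ < 1 := by
    have hball : Metric.ball (1:K) 1 ∈ 𝓝 (1:K) := Metric.ball_mem_nhds _ one_pos
    filter_upwards [hwlim.eventually_mem hball] with n hn
    rwa [Metric.mem_ball, dist_eq_norm] at hn
  obtain ⟨n, hn⟩ := hev.exists
  set w := x (φ n) * z⁻¹ with hw
  have hwn : ‖w‖ < 1 := by
    rw [hw, norm_mul, norm_inv, hznorm]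
    simpa using hx1 (φ n)
  have : (1:ℝ) ≤ max ‖1 - w‖ ‖w‖ := by
    have h1 : (1:K) = (1 - w) + w := by ring
    calc (1:ℝ) = ‖(1:K)‖ := norm_one.symm
      _ = ‖(1 - w) + w‖ := by rw [← h1]
      _ ≤ max ‖1 - w‖ ‖w‖ := IsUltrametricDist.norm_add_le_max _ _
  rw [norm_sub_rev] at this
  have : (1:ℝ) ≤ max ‖w - 1‖ ‖w‖ := this
  rcases max_cases ‖w - 1‖ ‖w‖ with ⟨he, _⟩ | ⟨he, _⟩ <;> rw [he] at this <;> linarith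

lemma pow_p_contract (x : K) (hx : ‖x - 1‖ < (p:ℝ)⁻¹) :
    ‖x ^ p - 1‖ ≤ (p:ℝ)⁻¹ * ‖x - 1‖ := by
  haveI := ultra p K
  have hp := (Fact.out : p.Prime)
  have hp1 : (1:ℝ) < p := by exact_mod_cast hp.one_lt
  have hpinv1 : (p:ℝ)⁻¹ ≤ 1 := by
    rw [inv_le_one_iff₀]; right; exact le_of_lt hp1
  have ht1 : ‖x - 1‖ ≤ 1 := le_of_lt (lt_of_lt_of_le hx hpinv1)
  set t : K := x - 1 with htdef
  have hxt : x = t + 1 := by rw [htdef]; ring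
  have hexpand : x ^ p - 1 = ∑ k ∈ Finset.Ico 1 (p + 1), t ^ k * (p.choose k : K) := by
    rw [hxt, add_pow]
    simp only [one_pow, mul_one]
    rw [Finset.range_eq_Ico, Finset.sum_eq_sum_Ico_succ_bot (Nat.succ_pos p)]
    simp
  rw [hexpand]
  apply IsUltrametricDist.norm_sum_le_of_forall_le_of_nonneg
  · positivity
  · intro k hk
    rw [Finset.mem_Ico] at hk
    obtain ⟨hk1, hk2⟩ := hk
    rw [norm_mul, norm_pow]
    rcases eq_or_lt_of_le (Nat.lt_succ_iff.mp hk2) with hkp | hkp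
    · -- k = p
      rw [hkp]
      simp only [Nat.choose_self, Nat.cast_one, norm_one, mul_one]
      have hppos : 0 < p := hp.pos
      have hp2 : 2 ≤ p := hp.two_le
      have hsplit : ‖t‖ ^ p = ‖t‖ ^ (p - 1) * ‖t‖ := by
        rw [← pow_succ]
        congr 1
        omega
      rw [hsplit]
      apply mul_le_mul_of_nonneg_right _ (norm_nonneg t)
      calc ‖t‖ ^ (p - 1) ≤ ‖t‖ ^ 1 := by
            apply pow_le_pow_of_le_one (norm_nonneg t) ht1
            omega
        _ = ‖t‖ := pow_one _
        _ ≤ (p:ℝ)⁻¹ := le_of_lt hx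
    · -- 1 ≤ k < p
      obtain ⟨e, he⟩ := hp.dvd_choose_self (Nat.one_le_iff_ne_zero.mp hk1) hkp
      have hnormC : ‖(p.choose k : K)‖ ≤ (p:ℝ)⁻¹ := by
        rw [he]
        push_cast
        rw [norm_mul, norm_p_padic p K]
        calc (p:ℝ)⁻¹ * ‖(e : K)‖ ≤ (p:ℝ)⁻¹ * 1 := by
              apply mul_le_mul_of_nonneg_left (norm_natCast_padic p K e) (by positivity)
          _ = (p:ℝ)⁻¹ := mul_one _
      have hnormT : ‖t‖ ^ k ≤ ‖t‖ := by
        calc ‖t‖ ^ k ≤ ‖t‖ ^ 1 := pow_le_pow_of_le_one (norm_nonneg t) ht1 hk1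
          _ = ‖t‖ := pow_one _
      calc ‖t‖ ^ k * ‖(p.choose k : K)‖ ≤ ‖t‖ * (p:ℝ)⁻¹ :=
            mul_le_mul hnormT hnormC (norm_nonneg _) (norm_nonneg _)
        _ = (p:ℝ)⁻¹ * ‖t‖ := mul_comm _ _

lemma pow_pn_contract (n : ℕ) (x : K) (hx : ‖x - 1‖ < (p:ℝ)⁻¹) :
    ‖x ^ (p ^ n) - 1‖ ≤ ((p:ℝ)⁻¹) ^ n * ‖x - 1‖ := by
  induction n generalizing x with
  | zero => simp
  | succ n ih =>
    have hp1 : (1:ℝ) < p := by exact_mod_cast (Fact.out : p.Prime).one_lt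
    have hpinvpos : (0:ℝ) < (p:ℝ)⁻¹ := by positivity
    have hpinv1 : (p:ℝ)⁻¹ ≤ 1 := by
      rw [inv_le_one_iff₀]; right; exact le_of_lt hp1
    have hxp := pow_p_contract p K x hx
    have hxp' : ‖x ^ p - 1‖ < (p:ℝ)⁻¹ := by
      have h1 : ‖x - 1‖ < 1 := lt_of_lt_of_le hx hpinv1
      calc ‖x ^ p - 1‖ ≤ (p:ℝ)⁻¹ * ‖x - 1‖ := hxp
        _ < (p:ℝ)⁻¹ * 1 := by
            apply mul_lt_mul_of_pos_left h1 hpinvpos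
        _ = (p:ℝ)⁻¹ := mul_one _
    have hpow : x ^ (p ^ (n + 1)) = (x ^ p) ^ (p ^ n) := by
      rw [← pow_mul, pow_succ, mul_comm]
    rw [hpow]
    calc ‖(x ^ p) ^ (p ^ n) - 1‖ ≤ ((p:ℝ)⁻¹) ^ n * ‖x ^ p - 1‖ := ih _ hxp'
      _ ≤ ((p:ℝ)⁻¹) ^ n * ((p:ℝ)⁻¹ * ‖x - 1‖) := by
          apply mul_le_mul_of_nonneg_left hxp (by positivity)
      _ = ((p:ℝ)⁻¹) ^ (n + 1) * ‖x - 1‖ := by ring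


lemma inter_pow_finite :
    Finite ↥(⨅ n : ℕ, (powMonoidHom (p ^ n) : Kˣ →* Kˣ).range) := by
  haveI := ultra p K
  haveI := proper p K
  have hp := (Fact.out : p.Prime)
  have hp1 : (1:ℝ) < p := by exact_mod_cast hp.one_lt
  have hpinvpos : (0:ℝ) < (p:ℝ)⁻¹ := by positivity
  have hpinv1 : (p:ℝ)⁻¹ ≤ 1 := by
    rw [inv_le_one_iff₀]; right; exact le_of_lt hp1
  -- every element close to 1 has norm one
  have hnorm1 : ∀ u : K, ‖u - 1‖ < 1 → ‖u‖ = 1 := by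
    intro u hu
    apply le_antisymm
    · calc ‖u‖ = ‖(u - 1) + 1‖ := by ring_nf
        _ ≤ max ‖u - 1‖ ‖(1:K)‖ := IsUltrametricDist.norm_add_le_max _ _
        _ ≤ 1 := by rw [norm_one]; exact max_le (le_of_lt hu) le_rfl
    · by_contra hlt
      push_neg at hlt
      have h1 : (1:ℝ) = ‖(1 - u) + u‖ := by norm_num
      have h2 : (1:ℝ) ≤ max ‖1 - u‖ ‖u‖ :=
        h1.trans_le (IsUltrametricDist.norm_add_le_max _ _)
      rw [norm_sub_rev] at h2
      rcases max_cases ‖u - 1‖ ‖u‖ with ⟨he, _⟩ | ⟨he, _⟩ <;> rw [he] at h2 <;> linarith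
  -- the principal units subgroup V
  let V : Subgroup Kˣ :=
    { carrier := {u : Kˣ | ‖(u : K) - 1‖ < (p:ℝ)⁻¹}
      one_mem' := by simp [hpinvpos]
      mul_mem' := by
        intro a b ha hb
        simp only [Set.mem_setOf_eq] at ha hb ⊢
        have hna : ‖(a:K)‖ = 1 := hnorm1 _ (lt_of_lt_of_le ha hpinv1)
        have : ((a * b : Kˣ) : K) - 1 = (a:K) * ((b:K) - 1) + ((a:K) - 1) := by
          push_cast; ring
        rw [this]
        calc ‖(a:K) * ((b:K) - 1) + ((a:K) - 1)‖
            ≤ max ‖(a:K) * ((b:K) - 1)‖ ‖(a:K) - 1‖ := IsUltrametricDist.norm_add_le_max _ _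
          _ < (p:ℝ)⁻¹ := by
              apply max_lt _ ha
              rw [norm_mul, hna, one_mul]
              exact hb
      inv_mem' := by
        intro a ha
        simp only [Set.mem_setOf_eq] at ha ⊢
        have hna : ‖(a:K)‖ = 1 := hnorm1 _ (lt_of_lt_of_le ha hpinv1)
        have : ((a⁻¹ : Kˣ) : K) - 1 = ((a:K))⁻¹ * (1 - (a:K)) := by
          rw [Units.val_inv_eq_inv_val]
          field_simp
        rw [this, norm_mul, norm_inv, hna, norm_sub_rev]
        simpa using ha }
  -- the unit sphere subgroup
  let Sg : Subgroup Kˣ :=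
    { carrier := {u : Kˣ | ‖(u : K)‖ = 1}
      one_mem' := by simp
      mul_mem' := by
        intro a b ha hb
        simp only [Set.mem_setOf_eq] at ha hb ⊢
        rw [Units.val_mul, norm_mul, ha, hb, mul_one]
      inv_mem' := by
        intro a ha
        simp only [Set.mem_setOf_eq] at ha ⊢
        rw [Units.val_inv_eq_inv_val, norm_inv, ha, inv_one] }
  have hVopen : IsOpen (V : Set Kˣ) := by
    have : (V : Set Kˣ) = Units.val ⁻¹' (Metric.ball (1:K) (p:ℝ)⁻¹) := by
      ext u
      simp [V, Metric.mem_ball, dist_eq_norm]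
    rw [this]
    exact Metric.isOpen_ball.preimage Units.continuous_val
  have hSgcomp : IsCompact (Sg : Set Kˣ) := by
    rw [Units.isEmbedding_val₀.isCompact_iff]
    have himg : Units.val '' (Sg : Set Kˣ) = Metric.sphere (0:K) 1 := by
      apply Set.Subset.antisymm
      · rintro _ ⟨u, hu, rfl⟩
        simp only [Metric.mem_sphere, dist_eq_norm, sub_zero]
        exact hu
      · intro x hx
        rw [Metric.mem_sphere, dist_eq_norm, sub_zero] at hx
        have hx0 : x ≠ 0 := by
          intro h; rw [h, norm_zero] at hx; exact one_ne_zero hx.symm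
        exact ⟨Units.mk0 x hx0, hx, rfl⟩
    rw [himg]
    exact isCompact_sphere 0 1
  haveI : CompactSpace ↥Sg := isCompact_iff_compactSpace.mp hSgcomp
  let V' : Subgroup ↥Sg := V.subgroupOf Sg
  have hV'open : IsOpen (V' : Set ↥Sg) := by
    have : (V' : Set ↥Sg) = (Subtype.val : ↥Sg → Kˣ) ⁻¹' (V : Set Kˣ) := by
      ext u
      simp [V', Subgroup.mem_subgroupOf]
    rw [this]
    exact hVopen.preimage continuous_subtype_val
  haveI hQfin : Finite (↥Sg ⧸ V') := Subgroup.quotient_finite_of_isOpen V' hV'open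
  set c := Nat.card (↥Sg ⧸ V') with hcdef
  have hc0 : c ≠ 0 := Nat.card_pos.ne'
  -- every norm-one unit to the power c lies in V
  have hkey : ∀ u : Kˣ, ‖(u:K)‖ = 1 → ‖((u ^ c : Kˣ) : K) - 1‖ < (p:ℝ)⁻¹ := by
    intro u hu
    let z : ↥Sg := ⟨u, hu⟩
    have hzq : (QuotientGroup.mk z : ↥Sg ⧸ V') ^ c = 1 := pow_card_eq_one'
    have hzc : z ^ c ∈ V' := by
      rw [← QuotientGroup.eq_one_iff]
      rw [← hzq]
      rfl
    have : ((z ^ c : ↥Sg) : Kˣ) ∈ V := (Subgroup.mem_subgroupOf).mp hzc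
    have hcoe : ((z ^ c : ↥Sg) : Kˣ) = u ^ c := by
      simp [z]
    rw [hcoe] at this
    exact this
  -- elements of the intersection have norm one
  set T := ⨅ n : ℕ, (powMonoidHom (p ^ n) : Kˣ →* Kˣ).range with hTdef
  obtain ⟨r, hr1, hrle⟩ := norm_gap p K
  have hTnorm : ∀ u : Kˣ, u ∈ T → ‖(u:K)‖ = 1 := by
    have haux : ∀ u : Kˣ, u ∈ T → ‖(u:K)‖ < 1 → False := by
      intro u hu hult
      set r' : ℝ := max r 0 with hr'
      have hr'1 : r' < 1 := max_lt hr1 one_pos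
      have hr'0 : 0 ≤ r' := le_max_right _ _
      have hub : ∀ n : ℕ, ‖(u:K)‖ ≤ r' ^ (n + 1) := by
        intro n
        have hun := Subgroup.mem_iInf.mp hu n
        obtain ⟨y, hy⟩ := hun
        rw [powMonoidHom_apply] at hy
        have hyu : (y:K) ^ (p ^ n) = (u:K) := by
          rw [← Units.val_pow_eq_pow_val]
          exact congrArg Units.val hy
        have hynorm : ‖(y:K)‖ < 1 := by
          by_contra hge
          push_neg at hge
          have : (1:ℝ) ≤ ‖(y:K)‖ ^ (p ^ n) := one_le_pow₀ hge
          rw [← norm_pow, hyu] at this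
          linarith
        have hyr : ‖(y:K)‖ ≤ r' := le_trans (hrle _ hynorm) (le_max_left _ _)
        have hp2n : n + 1 ≤ p ^ n := Nat.lt_pow_self hp.one_lt
        calc ‖(u:K)‖ = ‖(y:K)‖ ^ (p ^ n) := by rw [← norm_pow, hyu]
          _ ≤ r' ^ (p ^ n) := pow_le_pow_left₀ (norm_nonneg _) hyr _
          _ ≤ r' ^ (n + 1) := pow_le_pow_of_le_one hr'0 (le_of_lt hr'1) hp2n
      have hu0 : (0:ℝ) < ‖(u:K)‖ := norm_pos_iff.mpr u.ne_zero
      have htend : Filter.Tendsto (fun n : ℕ => r' ^ (n + 1)) Filter.atTop (𝓝 0) := by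
        have := tendsto_pow_atTop_nhds_zero_of_lt_one hr'0 hr'1
        exact this.comp (Filter.tendsto_add_atTop_nat 1)
      have : ‖(u:K)‖ ≤ 0 := ge_of_tendsto' htend hub
      linarith
    intro u hu
    rcases lt_trichotomy ‖(u:K)‖ 1 with h | h | h
    · exact absurd h (by intro hh; exact haux u hu hh)
    · exact h
    · exfalso
      apply haux u⁻¹ (Subgroup.inv_mem T hu)
      rw [Units.val_inv_eq_inv_val, norm_inv]
      exact inv_lt_one_of_one_lt₀ h
  -- elements of the intersection are c-torsion
  have hTtor : ∀ u : Kˣ, u ∈ T → u ^ c = 1 := by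
    intro u hu
    have hu1 : ‖(u:K)‖ = 1 := hTnorm u hu
    have hbound : ∀ n : ℕ, ‖((u ^ c : Kˣ) : K) - 1‖ ≤ ((p:ℝ)⁻¹) ^ n := by
      intro n
      obtain ⟨y, hy⟩ := Subgroup.mem_iInf.mp hu n
      rw [powMonoidHom_apply] at hy
      have hpn0 : p ^ n ≠ 0 := pow_ne_zero n hp.ne_zero
      have hynorm : ‖(y:K)‖ = 1 := by
        have h1 : ‖(y:K)‖ ^ (p ^ n) = 1 := by
          rw [← norm_pow, ← Units.val_pow_eq_pow_val, hy, hu1]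
        have h0 : (0:ℝ) ≤ ‖(y:K)‖ := norm_nonneg _
        rcases lt_trichotomy ‖(y:K)‖ 1 with h | h | h
        · exact absurd h1 (by have := pow_lt_one₀ h0 h hpn0; linarith)
        · exact h
        · exact absurd h1 (by have := one_lt_pow₀ h hpn0; linarith)
      have hyc := hkey y hynorm
      have hucy : (u ^ c : Kˣ) = (y ^ c) ^ (p ^ n) := by
        rw [← hy]
        rw [← pow_mul, ← pow_mul, mul_comm]
      have := pow_pn_contract p K n ((y ^ c : Kˣ) : K) hyc
      calc ‖((u ^ c : Kˣ) : K) - 1‖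
          = ‖(((y ^ c : Kˣ):K)) ^ (p ^ n) - 1‖ := by
            rw [hucy, Units.val_pow_eq_pow_val]
        _ ≤ ((p:ℝ)⁻¹) ^ n * ‖((y ^ c : Kˣ):K) - 1‖ := this
        _ ≤ ((p:ℝ)⁻¹) ^ n * 1 := by
            apply mul_le_mul_of_nonneg_left _ (by positivity)
            exact le_of_lt (lt_of_lt_of_le hyc hpinv1)
        _ = ((p:ℝ)⁻¹) ^ n := mul_one _
    have htend : Filter.Tendsto (fun n : ℕ => ((p:ℝ)⁻¹) ^ n) Filter.atTop (𝓝 0) :=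
      tendsto_pow_atTop_nhds_zero_of_lt_one (le_of_lt hpinvpos)
        (by rw [inv_lt_one_iff₀]; right; exact hp1)
    have hle0 : ‖((u ^ c : Kˣ) : K) - 1‖ ≤ 0 := ge_of_tendsto' htend hbound
    have heq : ((u ^ c : Kˣ) : K) = 1 := by
      have : ‖((u ^ c : Kˣ) : K) - 1‖ = 0 := le_antisymm hle0 (norm_nonneg _)
      rwa [norm_sub_eq_zero_iff] at this
    exact Units.ext (by rw [heq, Units.val_one])
  -- torsion elements are roots of a polynomial, hence finite
  have hpoly : ((Polynomial.X : Polynomial K) ^ c - Polynomial.C 1) ≠ 0 :=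
    (Polynomial.monic_X_pow_sub_C (1:K) hc0).ne_zero
  have hroots : Set.Finite {x : K | ((Polynomial.X : Polynomial K) ^ c
      - Polynomial.C 1).IsRoot x} := Polynomial.finite_setOf_isRoot hpoly
  haveI := hroots.to_subtype
  apply Finite.of_injective (fun u : ↥T => (⟨((u : Kˣ) : K), by
    have := hTtor u u.2
    simp only [Set.mem_setOf_eq, Polynomial.IsRoot, Polynomial.eval_sub,
      Polynomial.eval_pow, Polynomial.eval_X, Polynomial.eval_C]
    rw [← Units.val_pow_eq_pow_val, this, Units.val_one, sub_self]⟩ :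
    {x : K | ((Polynomial.X : Polynomial K) ^ c - Polynomial.C 1).IsRoot x}))
  intro a b hab
  ext
  exact congrArg Subtype.val hab

end KLemmas

/-- Proposition 3.6: let `K` be a finite extension of `ℚ_p` with its canonical (normed)
topology, and `f : (Kˣ)^r → (Kˣ)^r` a continuous group endomorphism.  If the cokernel of `f`
is finite, then so is the kernel of `f`. -/
theorem finite_kernel_of_finite_cokernel_padic
    (p : ℕ) [Fact p.Prime] (K : Type*) [NormedField K] [NormedAlgebra ℚ_[p] K]
    [FiniteDimensional ℚ_[p] K]
    (r : ℕ)
    (f : (Fin r → Kˣ) →* (Fin r → Kˣ)) (hf : Continuous f)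
    (hcoker : Finite ((Fin r → Kˣ) ⧸ f.range)) :
    Finite f.ker := by
  classical
  have hp := (Fact.out : p.Prime)
  set G := Fin r → Kˣ with hGdef
  let W : ℕ → Subgroup Kˣ := fun n => (powMonoidHom (p ^ n) : Kˣ →* Kˣ).range
  let H : ℕ → Subgroup G := fun n => (powMonoidHom (p ^ n) : G →* G).range
  have hanti : ∀ n, H (n + 1) ≤ H n := by
    rintro n _ ⟨y, rfl⟩
    refine ⟨y ^ p, ?_⟩
    rw [powMonoidHom_apply, powMonoidHom_apply, ← pow_mul, ← pow_succ']
  have hmap : ∀ n, (H n).map f ≤ H n := by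
    rintro n _ ⟨_, ⟨y, rfl⟩, rfl⟩
    exact ⟨f y, by rw [powMonoidHom_apply, powMonoidHom_apply, map_pow]⟩
  have hWfin : ∀ n : ℕ, Finite (Kˣ ⧸ W n) := fun n =>
    quot_pow_finite p K (p ^ n) (pow_pos hp.pos n)
  have hfin : ∀ n, Finite (G ⧸ H n) := by
    intro n
    have hpi : H n = Subgroup.pi Set.univ (fun _ : Fin r => W n) := by
      ext x
      constructor
      · rintro ⟨y, rfl⟩ i _
        exact ⟨y i, rfl⟩
      · intro hx
        have hxi : ∀ i, x i ∈ W n := fun i => hx i (Set.mem_univ i)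
        choose g hg using hxi
        refine ⟨g, ?_⟩
        funext i
        exact hg i
    have hidx : (H n).index ≠ 0 := by
      rw [hpi, Subgroup.index_pi]
      haveI : Finite (Kˣ ⧸ W n) := hWfin n
      have hWidx : (W n).index ≠ 0 := by
        have : 0 < Nat.card (Kˣ ⧸ W n) := Nat.card_pos
        simpa [Subgroup.index] using this.ne'
      simp [hWidx]
    exact Nat.finite_of_card_ne_zero (by simpa [Subgroup.index] using hidx)
  have hint : Finite ↥(⨅ n, H n) := by
    haveI := inter_pow_finite p K
    haveI : Finite (Fin r → ↥(⨅ n : ℕ, W n)) := Pi.finite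
    have hsub : ∀ x : G, x ∈ (⨅ n, H n) → ∀ i, x i ∈ (⨅ n : ℕ, W n) := by
      intro x hx i
      rw [Subgroup.mem_iInf]
      intro n
      obtain ⟨y, hy⟩ := Subgroup.mem_iInf.mp hx n
      exact ⟨y i, by rw [← hy]; rfl⟩
    let e : ↥(⨅ n, H n) → (Fin r → ↥(⨅ n : ℕ, W n)) :=
      fun x i => ⟨(x : G) i, hsub x x.2 i⟩
    refine Finite.of_injective e ?_
    intro a b hab
    apply Subtype.ext
    funext i
    exact congrArg Subtype.val (congrFun hab i)
  exact core_lemma f hcoker H hanti hmap hfin hint
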